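/- For every n ≥ 2, the expected Sackin index of a phylogenetic tree on n taxa under the uniform model equals 4^{n−1}·n!·(n−1)!/(2n−2)! − n. -/

import Mathlib

/-- Full binary rooted trees with leaves carrying data of type `α`. -/
inductive BTree (α : Type) : Type
  | leaf (a : α) : BTree α
  | node (l r : BTree α) : BTree α

namespace BTree

/-- Number of leaves below (the subtree rooted at) a node. -/
def leaves {α} : BTree α → ℕ
  | leaf _ => 1
  | node l r => leaves l + leaves r

/-- Sackin index: sum over internal nodes of the number of leaves below that node. -/
def sackin {α} : BTree α → ℕ
  | leaf _ => 0
  | node l r => (leaves l + leaves r) + sackin l + sackin r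

/-- Colless index: sum over internal nodes of the absolute difference of leaf counts
of the two children. -/
def colless {α} : BTree α → ℕ
  | leaf _ => 0
  | node l r => ((leaves l : ℤ) - (leaves r : ℤ)).natAbs + colless l + colless r

/-- Sum over all leaves of their depth (number of edges from the root). -/
def depthSum {α} : BTree α → ℕ
  | leaf _ => 0
  | node l r => (depthSum l + leaves l) + (depthSum r + leaves r)

/-- Sum of leaf counts `ℓ_T(u)` over all nodes `u` (including leaves, each counting 1). -/
def totalL {α} : BTree α → ℕ
  | leaf _ => 1
  | node l r => (leaves l + leaves r) + totalL l + totalL r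

/-- Sum over internal nodes of the minimum of the leaf counts of the two children. -/
def minSum {α} : BTree α → ℕ
  | leaf _ => 0
  | node l r => min (leaves l) (leaves r) + minSum l + minSum r

/-- Number of edges strictly below a node (each node of the subtree other than
its root contributes the edge to its parent). -/
def edgesBelow {α} : BTree α → ℕ
  | leaf _ => 0
  | node l r => 2 + edgesBelow l + edgesBelow r

/-- Number of internal (non-leaf) nodes. -/
def internals {α} : BTree α → ℕ
  | leaf _ => 0
  | node l r => 1 + internals l + internals r

/-- `Subtree s t` means the subtree `s` occurs in `t`; thus `Subtree (node v w) T`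
expresses that `T` has an internal node whose two child subtrees are `v` and `w`. -/
inductive Subtree {α} : BTree α → BTree α → Prop
  | refl (t) : Subtree t t
  | left {s l r} : Subtree s l → Subtree s (node l r)
  | right {s l r} : Subtree s r → Subtree s (node l r)

/-- Generating relation of tree-shape isomorphism: swapping the two children of a node. -/
inductive Rel {α} : BTree α → BTree α → Prop
  | swap (l r) : Rel (node l r) (node r l)
  | congrL {l l'} (r) : Rel l l' → Rel (node l r) (node l' r)
  | congrR (l) {r r'} : Rel r r' → Rel (node l r) (node l r')

/-- The list of leaf labels, left to right. -/
def leafList {α} : BTree α → List α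
  | leaf a => [a]
  | node l r => leafList l ++ leafList r

end BTree

/-- Binary tree shapes: full binary rooted trees up to isomorphism (children unordered). -/
def Shape : Type := Quot (@BTree.Rel Unit)

noncomputable def Shape.leaves (q : Shape) : ℕ := BTree.leaves q.out
noncomputable def Shape.sackin (q : Shape) : ℕ := BTree.sackin q.out
noncomputable def Shape.colless (q : Shape) : ℕ := BTree.colless q.out

/-- `bSh n` = number of binary tree shapes with `n` leaves. -/
noncomputable def bSh (n : ℕ) : ℕ := Set.ncard {q : Shape | q.leaves = n}

/-- `S_n`: total Sackin index over all tree shapes with `n` leaves. -/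
noncomputable def Snum (n : ℕ) : ℕ := ∑ᶠ q ∈ {q : Shape | q.leaves = n}, Shape.sackin q

/-- `D_n = (1/2) Σ_{T ∈ 𝒯(n)} (S(T) - C(T))`. -/
noncomputable def Dnum (n : ℕ) : ℕ :=
  (∑ᶠ q ∈ {q : Shape | q.leaves = n}, (Shape.sackin q - Shape.colless q)) / 2

/-- Phylogenetic trees as labelled full binary rooted trees up to isomorphism. -/
def PTree : Type := Quot (@BTree.Rel ℕ)

/-- A labelled tree is a phylogenetic tree on `n` taxa if its leaf labels are
exactly `{1, ..., n}`, each occurring once. -/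
def BTree.isPhylo (n : ℕ) (t : BTree ℕ) : Prop :=
  (BTree.leafList t).Perm ((List.range n).map (· + 1))

/-- The set `𝒫(n)` of phylogenetic trees on `n` taxa. -/
noncomputable def PhyloSet (n : ℕ) : Set PTree := {q | BTree.isPhylo n q.out}

/-- `a_n = |𝒫(n)|`. -/
noncomputable def aP (n : ℕ) : ℕ := Set.ncard (PhyloSet n)

/-- Total Sackin index over all phylogenetic trees on `n` taxa. -/
noncomputable def SpTotal (n : ℕ) : ℕ := ∑ᶠ q ∈ PhyloSet n, BTree.sackin (Quot.out q)

/-- All trees obtained from `t` by attaching a new leaf labelled `x` on each of the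
`2·leaves t - 1` edges of `t` (including the open edge entering the root). -/
def BTree.attach (x : ℕ) : BTree ℕ → List (BTree ℕ)
  | .leaf a => [.node (.leaf a) (.leaf x)]
  | .node l r =>
      .node (.node l r) (.leaf x) ::
        ((BTree.attach x l).map (fun l' => .node l' r) ++
         (BTree.attach x r).map (fun r' => .node l r'))

open BTree
open scoped Classical

namespace MyAux


deriving instance DecidableEq for BTree

/-- attach a new leaf `x` on every edge (incl. root edge), both sides. -/
def attach2 (x : ℕ) : BTree ℕ → List (BTree ℕ)
  | .leaf a => [.node (.leaf a) (.leaf x), .node (.leaf x) (.leaf a)]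
  | .node l r =>
      .node (.node l r) (.leaf x) :: .node (.leaf x) (.node l r) ::
      ((attach2 x l).map (fun l' => .node l' r) ++ (attach2 x r).map (fun r' => .node l r'))

/-- delete the leaf labelled `x`. -/
def del (x : ℕ) : BTree ℕ → BTree ℕ
  | .leaf a => .leaf a
  | .node l r =>
    if l = .leaf x then r else if r = .leaf x then l else .node (del x l) (del x r)

/-- all trees obtained by swapping children at arbitrary internal nodes. -/
def flips : BTree ℕ → List (BTree ℕ)
  | .leaf a => [.leaf a]
  | .node l r => (flips l).flatMap (fun l' => (flips r).flatMap (fun r' => [.node l' r', .node r' l']))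

/-- ordered phylogenetic trees on `{1,…,n}` -/
def allP : ℕ → List (BTree ℕ)
  | 0 => []
  | 1 => [.leaf 1]
  | (n+2) => (allP (n+1)).flatMap (attach2 (n+2))

lemma leaves_pos {α} (t : BTree α) : 1 ≤ t.leaves := by
  induction t with
  | leaf a => simp [BTree.leaves]
  | node l r ihl ihr => simp only [BTree.leaves]; omega

lemma length_leafList {α} (t : BTree α) : t.leafList.length = t.leaves := by
  induction t with
  | leaf a => simp [BTree.leafList, BTree.leaves]
  | node l r ihl ihr => simp [BTree.leafList, BTree.leaves, ihl, ihr]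

lemma internals_add_one {α} (t : BTree α) : t.internals + 1 = t.leaves := by
  induction t with
  | leaf a => simp [BTree.internals, BTree.leaves]
  | node l r ihl ihr => simp only [BTree.internals, BTree.leaves]; omega

lemma leafList_attach2 {x : ℕ} {t s : BTree ℕ} (h : s ∈ attach2 x t) :
    s.leafList.Perm (x :: t.leafList) := by
  induction t generalizing s with
  | leaf a =>
    simp only [attach2, List.mem_cons, List.not_mem_nil, or_false] at h
    rcases h with rfl | rfl
    · simp [BTree.leafList]; exact List.Perm.swap _ _ _
    · simp [BTree.leafList]
  | node l r ihl ihr =>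
    simp only [attach2, List.mem_cons, List.mem_append, List.mem_map] at h
    rcases h with rfl | rfl | ⟨l', hl', rfl⟩ | ⟨r', hr', rfl⟩
    · show ((l.leafList ++ r.leafList) ++ [x]).Perm (x :: (l.leafList ++ r.leafList))
      simpa using (List.perm_append_comm (l₁ := l.leafList ++ r.leafList) (l₂ := [x]))
    · simp [BTree.leafList]
    · show (l'.leafList ++ r.leafList).Perm (x :: (l.leafList ++ r.leafList))
      exact ((ihl hl').append_right _).trans (by rfl)
    · show (l.leafList ++ r'.leafList).Perm (x :: (l.leafList ++ r.leafList))
      exact ((ihr hr').append_left _).trans List.perm_middle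

lemma leaves_attach2 {x : ℕ} {t s : BTree ℕ} (h : s ∈ attach2 x t) :
    s.leaves = t.leaves + 1 := by
  have := (leafList_attach2 h).length_eq
  simpa [length_leafList] using this

lemma mem_leafList_attach2 {x : ℕ} {t s : BTree ℕ} (h : s ∈ attach2 x t) :
    x ∈ s.leafList := ((leafList_attach2 h).mem_iff).2 List.mem_cons_self

lemma attach2_is_node {x : ℕ} {t s : BTree ℕ} (h : s ∈ attach2 x t) :
    ∃ u v, s = BTree.node u v := by
  induction t generalizing s with
  | leaf a =>
    simp only [attach2, List.mem_cons, List.not_mem_nil, or_false] at h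
    rcases h with rfl | rfl <;> exact ⟨_, _, rfl⟩
  | node l r ihl ihr =>
    simp only [attach2, List.mem_cons, List.mem_append, List.mem_map] at h
    rcases h with rfl | rfl | ⟨l', hl', rfl⟩ | ⟨r', hr', rfl⟩ <;> exact ⟨_, _, rfl⟩

lemma del_not_mem {x : ℕ} {t : BTree ℕ} (h : x ∉ t.leafList) : del x t = t := by
  induction t with
  | leaf a => simp [del]
  | node l r ihl ihr =>
    simp only [BTree.leafList, List.mem_append, not_or] at h
    have hl : l ≠ .leaf x := by rintro rfl; simp [BTree.leafList] at h
    have hr : r ≠ .leaf x := by rintro rfl; simp [BTree.leafList] at h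
    simp [del, hl, hr, ihl h.1, ihr h.2]

lemma del_attach2 {x : ℕ} {t s : BTree ℕ} (hx : x ∉ t.leafList) (h : s ∈ attach2 x t) :
    del x s = t := by
  induction t generalizing s with
  | leaf a =>
    simp only [attach2, List.mem_cons, List.not_mem_nil, or_false] at h
    have : a ≠ x := by simp [BTree.leafList] at hx; omega
    rcases h with rfl | rfl <;> simp [del, this]
  | node l r ihl ihr =>
    simp only [BTree.leafList, List.mem_append, not_or] at hx
    have hl : l ≠ .leaf x := by rintro rfl; simp [BTree.leafList] at hx
    have hr : r ≠ .leaf x := by rintro rfl; simp [BTree.leafList] at hx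
    simp only [attach2, List.mem_cons, List.mem_append, List.mem_map] at h
    rcases h with rfl | rfl | ⟨l', hl', rfl⟩ | ⟨r', hr', rfl⟩
    · simp [del]
    · simp [del]
    · have hl'x : l' ≠ .leaf x := by
        obtain ⟨u, v, rfl⟩ := attach2_is_node hl'
        simp
      simp [del, hl'x, hr, ihl hx.1 hl', del_not_mem hx.2]
    · have hr'x : r' ≠ .leaf x := by
        obtain ⟨u, v, rfl⟩ := attach2_is_node hr'
        simp
      simp [del, hl, hr'x, ihr hx.2 hr', del_not_mem hx.1]



lemma head_mem_attach2 (x : ℕ) (t : BTree ℕ) :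
    BTree.node t (.leaf x) ∈ attach2 x t ∧ BTree.node (.leaf x) t ∈ attach2 x t := by
  cases t <;> simp [attach2]

lemma mem_attach2_del {x : ℕ} : ∀ t : BTree ℕ, (∃ u v, t = BTree.node u v) →
    x ∈ t.leafList → t.leafList.Nodup → t ∈ attach2 x (del x t) := by
  intro t
  induction t with
  | leaf a => rintro ⟨u, v, h⟩; cases h
  | node l r ihl ihr =>
    rintro - hx hnd
    simp only [BTree.leafList] at hx hnd
    have hdisj := List.disjoint_of_nodup_append hnd
    have hndl := hnd.of_append_left
    have hndr := hnd.of_append_right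
    by_cases hl : l = .leaf x
    · subst hl
      simp only [del, if_pos rfl]
      exact (head_mem_attach2 x r).2
    · by_cases hr : r = .leaf x
      · subst hr
        simp only [del, if_neg hl, if_pos rfl]
        exact (head_mem_attach2 x l).1
      · rcases List.mem_append.1 hx with hxl | hxr
        · have hxr' : x ∉ r.leafList := fun h => hdisj hxl h
          have hln : ∃ u v, l = BTree.node u v := by
            cases l with
            | leaf a =>
              exfalso; apply hl
              simp only [BTree.leafList, List.mem_singleton] at hxl
              rw [hxl]
            | node u v => exact ⟨u, v, rfl⟩
          have hmem := ihl hln hxl hndl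
          simp only [del, if_neg hl, if_neg hr, del_not_mem hxr']
          simp only [attach2, List.mem_cons, List.mem_append, List.mem_map]
          right; right; left
          exact ⟨l, hmem, rfl⟩
        · have hxl' : x ∉ l.leafList := fun h => hdisj h hxr
          have hrn : ∃ u v, r = BTree.node u v := by
            cases r with
            | leaf a =>
              exfalso; apply hr
              simp only [BTree.leafList, List.mem_singleton] at hxr
              rw [hxr]
            | node u v => exact ⟨u, v, rfl⟩
          have hmem := ihr hrn hxr hndr
          simp only [del, if_neg hl, if_neg hr, del_not_mem hxl']
          simp only [attach2, List.mem_cons, List.mem_append, List.mem_map]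
          right; right; right
          exact ⟨r, hmem, rfl⟩



lemma node_ne_left (l r : BTree ℕ) : BTree.node l r ≠ l := by
  intro h
  have := congrArg BTree.leaves h
  simp only [BTree.leaves] at this
  have := leaves_pos r
  omega

lemma leafList_del {x : ℕ} : ∀ t : BTree ℕ, t ≠ .leaf x →
    t.leafList.Nodup → (del x t).leafList.Perm (t.leafList.erase x) := by
  intro t
  induction t with
  | leaf a =>
    intro hax _
    have h : ¬ a = x := fun h => hax (by rw [h])
    simp only [del, BTree.leafList]
    rw [List.erase_of_not_mem (fun hx => h (List.mem_singleton.1 hx).symm)]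
  | node l r ihl ihr =>
    intro _ hnd
    simp only [BTree.leafList] at hnd ⊢
    have hdisj := List.disjoint_of_nodup_append hnd
    have hndl := hnd.of_append_left
    have hndr := hnd.of_append_right
    by_cases hl : l = .leaf x
    · subst hl
      show (del x ((BTree.leaf x).node r)).leafList.Perm (([x] ++ r.leafList).erase x)
      rw [List.singleton_append, List.erase_cons_head]
      simp [del]
    · by_cases hr : r = .leaf x
      · subst hr
        have hxl : x ∉ l.leafList := fun h => hdisj h (by simp [BTree.leafList])
        show (del x (l.node (BTree.leaf x))).leafList.Perm ((l.leafList ++ [x]).erase x)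
        rw [List.erase_append_right _ hxl, List.erase_cons_head]
        simp [del, hl]
      · simp only [del, if_neg hl, if_neg hr, BTree.leafList]
        by_cases hxl : x ∈ l.leafList
        · have hxr : x ∉ r.leafList := fun h => hdisj hxl h
          rw [List.erase_append_left _ hxl, del_not_mem hxr]
          exact (ihl hl hndl).append_right _
        · rw [List.erase_append_right _ hxl, del_not_mem hxl]
          exact (ihr hr hndr).append_left _

lemma nodup_attach2 {x : ℕ} : ∀ t : BTree ℕ, x ∉ t.leafList → (attach2 x t).Nodup := by
  intro t
  induction t with
  | leaf a =>
    intro hx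
    have : a ≠ x := by simp [BTree.leafList] at hx; omega
    simp [attach2, this]
  | node l r ihl ihr =>
    intro hx
    simp only [BTree.leafList, List.mem_append, not_or] at hx
    obtain ⟨hxl, hxr⟩ := hx
    have hlx : l ≠ .leaf x := by rintro rfl; simp [BTree.leafList] at hxl
    have hrx : r ≠ .leaf x := by rintro rfl; simp [BTree.leafList] at hxr
    simp only [attach2]
    refine List.nodup_cons.2 ⟨?_, List.nodup_cons.2 ⟨?_, ?_⟩⟩
    · -- node (node l r) (leaf x) not in rest
      simp only [List.mem_cons, List.mem_append, List.mem_map, not_or]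
      refine ⟨by simp, ?_, ?_⟩
      · rintro ⟨l', hl', h⟩
        injection h with h1 h2
        exact hrx h2
      · rintro ⟨r', hr', h⟩
        injection h with h1 h2
        exact node_ne_left l r h1.symm
    · -- node (leaf x) (node l r) not in rest
      simp only [List.mem_append, List.mem_map, not_or]
      constructor
      · rintro ⟨l', hl', h⟩
        injection h with h1 h2
        obtain ⟨u, v, rfl⟩ := attach2_is_node hl'
        cases h1
      · rintro ⟨r', hr', h⟩
        injection h with h1 h2
        exact hlx h1
    · refine List.Nodup.append ?_ ?_ ?_
      · exact (ihl hxl).map (fun a b h => by injection h)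
      · exact (ihr hxr).map (fun a b h => by injection h)
      · intro s hs hs'
        simp only [List.mem_map] at hs hs'
        obtain ⟨l', hl', rfl⟩ := hs
        obtain ⟨r', hr', h⟩ := hs'
        injection h with h1 h2
        subst h1
        exact hxl (mem_leafList_attach2 hl')

lemma range_map_succ_eq (n : ℕ) :
    (List.range (n+2)).map (· + 1) = (List.range (n+1)).map (· + 1) ++ [n+2] := by
  rw [List.range_succ, List.map_append]
  simp

lemma mem_allP_isPhylo : ∀ n (t : BTree ℕ), t ∈ allP n → t.isPhylo n := by
  intro n
  induction n with
  | zero => intro t ht; simp [allP] at ht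
  | succ m ih =>
    match m, ih with
    | 0, _ =>
      intro t ht
      simp only [allP, List.mem_singleton] at ht
      subst ht
      simp [BTree.isPhylo, BTree.leafList, List.range_succ]
    | (k+1), ih =>
      intro t ht
      simp only [allP, List.mem_flatMap] at ht
      obtain ⟨t₀, ht₀, hat⟩ := ht
      have h1 : t.leafList.Perm ((k+2) :: t₀.leafList) := leafList_attach2 hat
      have h2 := ih t₀ ht₀
      unfold BTree.isPhylo at h2 ⊢
      rw [show k+1+1 = k+2 from rfl, range_map_succ_eq k]
      exact (h1.trans (h2.cons _)).trans (List.perm_append_singleton _ _).symm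

lemma isPhylo_nodup {n : ℕ} {t : BTree ℕ} (h : t.isPhylo n) : t.leafList.Nodup :=
  h.symm.nodup (List.nodup_range.map (add_left_injective 1))

lemma not_mem_of_isPhylo {n : ℕ} {t : BTree ℕ} (h : t.isPhylo n) {y : ℕ} (hy : n < y) :
    y ∉ t.leafList := by
  intro hmem
  have := h.mem_iff.1 hmem
  simp only [List.mem_map, List.mem_range] at this
  omega

lemma leaves_of_isPhylo {n : ℕ} {t : BTree ℕ} (h : t.isPhylo n) : t.leaves = n := by
  have := h.length_eq
  simpa [length_leafList] using this

lemma isPhylo_mem_allP : ∀ n (t : BTree ℕ), t.isPhylo n → t ∈ allP n := by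
  intro n
  induction n with
  | zero =>
    intro t ht
    have h1 := leaves_of_isPhylo ht
    have h2 := leaves_pos t
    omega
  | succ m ih =>
    match m, ih with
    | 0, _ =>
      intro t ht
      cases t with
      | leaf a =>
        have : a = 1 := by
          have := ht.mem_iff (a := a)
          simp [BTree.leafList] at this
          omega
        subst this
        simp [allP]
      | node l r =>
        exfalso
        have h1 := leaves_of_isPhylo ht
        have h2 := leaves_pos l
        have h3 := leaves_pos r
        simp only [BTree.leaves] at h1
        omega
    | (k+1), ih =>
      intro t ht
      have hnd := isPhylo_nodup ht
      have hxmem : (k+2) ∈ t.leafList := by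
        apply ht.mem_iff.2
        simp only [List.mem_map, List.mem_range]
        exact ⟨k+1, by omega, rfl⟩
      have htn : ∃ u v, t = BTree.node u v := by
        cases t with
        | leaf a =>
          exfalso
          have := leaves_of_isPhylo ht
          simp [BTree.leaves] at this
        | node u v => exact ⟨u, v, rfl⟩
      have hmem := mem_attach2_del t htn hxmem hnd
      obtain ⟨u, v, htuv⟩ := htn
      have htne : t ≠ .leaf (k+2) := by rw [htuv]; simp
      have hdelphylo : (del (k+2) t).isPhylo (k+1) := by
        unfold BTree.isPhylo
        have e1 : (del (k+2) t).leafList.Perm (t.leafList.erase (k+2)) :=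
          leafList_del t htne hnd
        have e2 : (t.leafList.erase (k+2)).Perm
            (((List.range (k+2)).map (· + 1)).erase (k+2)) := ht.erase _
        have e3 : (((List.range (k+2)).map (· + 1)).erase (k+2))
            = (List.range (k+1)).map (· + 1) := by
          rw [range_map_succ_eq, List.erase_append_right, List.erase_cons_head,
            List.append_nil]
          intro hc
          simp only [List.mem_map, List.mem_range] at hc
          omega
        rw [show k+1+1 = k+2 from rfl] at *
        exact (e1.trans e2).trans (by rw [e3])
      simp only [allP, List.mem_flatMap]
      exact ⟨del (k+2) t, ih _ hdelphylo, hmem⟩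

lemma nodup_allP : ∀ n, (allP n).Nodup := by
  intro n
  induction n with
  | zero => simp [allP]
  | succ m ih =>
    match m, ih with
    | 0, _ => simp [allP]
    | (k+1), ih =>
      simp only [allP]
      rw [List.nodup_flatMap]
      constructor
      · intro t ht
        exact nodup_attach2 t (not_mem_of_isPhylo (mem_allP_isPhylo _ t ht) (by omega))
      · refine ih.imp_of_mem ?_
        intro t t' ht ht' hne
        intro s hs hs'
        have hxt : (k+2) ∉ t.leafList :=
          not_mem_of_isPhylo (mem_allP_isPhylo _ t ht) (by omega)
        have hxt' : (k+2) ∉ t'.leafList :=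
          not_mem_of_isPhylo (mem_allP_isPhylo _ t' ht') (by omega)
        exact hne ((del_attach2 hxt hs).symm.trans (del_attach2 hxt' hs'))



lemma sum_map_of_const {α : Type} (l : List α) (f : α → ℕ) (c : ℕ)
    (h : ∀ s ∈ l, f s = c) : (l.map f).sum = l.length * c := by
  induction l with
  | nil => simp
  | cons a t ih =>
    simp only [List.map_cons, List.sum_cons, List.length_cons]
    rw [h a (by simp), ih (fun s hs => h s (by simp [hs])), Nat.succ_mul]
    ring

lemma length_attach2 (x : ℕ) : ∀ t : BTree ℕ, (attach2 x t).length + 2 = 4 * t.leaves := by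
  intro t
  induction t with
  | leaf a => simp [attach2, BTree.leaves]
  | node l r ihl ihr =>
    simp only [attach2, List.length_cons, List.length_append, List.length_map, BTree.leaves]
    omega

lemma sum_node_right (A : List (BTree ℕ)) (r : BTree ℕ) (c : ℕ)
    (h : ∀ s ∈ A, s.leaves = c) :
    (A.map (fun l' => BTree.sackin (BTree.node l' r))).sum
      = A.length * (c + r.leaves + r.sackin) + (A.map BTree.sackin).sum := by
  induction A with
  | nil => simp
  | cons a t ih =>
    simp only [List.map_cons, List.sum_cons, List.length_cons]
    rw [ih (fun s hs => h s (by simp [hs])), Nat.succ_mul]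
    show a.leaves + r.leaves + a.sackin + r.sackin + _ = _
    rw [h a (by simp)]
    ring

lemma sum_node_left (A : List (BTree ℕ)) (l : BTree ℕ) (c : ℕ)
    (h : ∀ s ∈ A, s.leaves = c) :
    (A.map (fun r' => BTree.sackin (BTree.node l r'))).sum
      = A.length * (l.leaves + c + l.sackin) + (A.map BTree.sackin).sum := by
  induction A with
  | nil => simp
  | cons a t ih =>
    simp only [List.map_cons, List.sum_cons, List.length_cons]
    rw [ih (fun s hs => h s (by simp [hs])), Nat.succ_mul]
    show l.leaves + a.leaves + l.sackin + a.sackin + _ = _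
    rw [h a (by simp)]
    ring

lemma sackin_sum_attach2 (x : ℕ) : ∀ t : BTree ℕ,
    ((attach2 x t).map BTree.sackin).sum
      = (4 * t.leaves + 4) * t.sackin + 2 * t.leaves + 2 := by
  intro t
  induction t with
  | leaf a => simp [attach2, BTree.sackin, BTree.leaves]
  | node l r ihl ihr =>
    have hLl := length_attach2 x l
    have hLr := length_attach2 x r
    have hc : ∀ s ∈ attach2 x l, s.leaves = l.leaves + 1 := fun s hs => leaves_attach2 hs
    have hc' : ∀ s ∈ attach2 x r, s.leaves = r.leaves + 1 := fun s hs => leaves_attach2 hs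
    simp only [attach2, List.map_cons, List.sum_cons, List.map_append, List.sum_append,
      List.map_map, Function.comp_def]
    rw [sum_node_right _ _ _ hc, sum_node_left _ _ _ hc', ihl, ihr]
    simp only [BTree.sackin, BTree.leaves]
    zify
    have e1 : ((attach2 x l).length : ℤ) = 4 * l.leaves - 2 := by
      have : ((attach2 x l).length : ℤ) + 2 = 4 * l.leaves := by exact_mod_cast hLl
      linarith
    have e2 : ((attach2 x r).length : ℤ) = 4 * r.leaves - 2 := by
      have : ((attach2 x r).length : ℤ) + 2 = 4 * r.leaves := by exact_mod_cast hLr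
      linarith
    rw [e1, e2]
    ring



lemma mem_flips_node {l r s : BTree ℕ} :
    s ∈ flips (BTree.node l r) ↔
      ∃ l' ∈ flips l, ∃ r' ∈ flips r, s = BTree.node l' r' ∨ s = BTree.node r' l' := by
  simp only [flips, List.mem_flatMap, List.mem_cons, List.not_mem_nil, or_false]

lemma flips_self : ∀ t : BTree ℕ, t ∈ flips t := by
  intro t
  induction t with
  | leaf a => simp [flips]
  | node l r ihl ihr => exact mem_flips_node.2 ⟨l, ihl, r, ihr, Or.inl rfl⟩

lemma leafList_flips : ∀ {t s : BTree ℕ}, s ∈ flips t → s.leafList.Perm t.leafList := by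
  intro t
  induction t with
  | leaf a => intro s hs; simp only [flips, List.mem_singleton] at hs; subst hs; rfl
  | node l r ihl ihr =>
    intro s hs
    obtain ⟨l', hl', r', hr', h | h⟩ := mem_flips_node.1 hs <;> subst h
    · exact ((ihl hl').append ((ihr hr')))
    · show (r'.leafList ++ l'.leafList).Perm (l.leafList ++ r.leafList)
      exact (List.perm_append_comm).trans ((ihl hl').append ((ihr hr')))

lemma leaves_flips {t s : BTree ℕ} (h : s ∈ flips t) : s.leaves = t.leaves := by
  have := (leafList_flips h).length_eq
  simpa [length_leafList] using this

lemma sackin_flips : ∀ {t s : BTree ℕ}, s ∈ flips t → s.sackin = t.sackin := by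
  intro t
  induction t with
  | leaf a => intro s hs; simp only [flips, List.mem_singleton] at hs; subst hs; rfl
  | node l r ihl ihr =>
    intro s hs
    obtain ⟨l', hl', r', hr', h | h⟩ := mem_flips_node.1 hs <;> subst h <;>
      simp only [BTree.sackin, leaves_flips hl', leaves_flips hr', ihl hl', ihr hr'] <;> ring

lemma flips_symm : ∀ {t s : BTree ℕ}, s ∈ flips t → t ∈ flips s := by
  intro t
  induction t with
  | leaf a => intro s hs; simp only [flips, List.mem_singleton] at hs; subst hs; simp [flips]
  | node l r ihl ihr =>
    intro s hs
    obtain ⟨l', hl', r', hr', h | h⟩ := mem_flips_node.1 hs <;> subst h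
    · exact mem_flips_node.2 ⟨l, ihl hl', r, ihr hr', Or.inl rfl⟩
    · exact mem_flips_node.2 ⟨r, ihr hr', l, ihl hl', Or.inr rfl⟩

lemma flips_trans : ∀ {t s u : BTree ℕ}, s ∈ flips t → u ∈ flips s → u ∈ flips t := by
  intro t
  induction t with
  | leaf a =>
    intro s u hs hu
    simp only [flips, List.mem_singleton] at hs; subst hs; exact hu
  | node l r ihl ihr =>
    intro s u hs hu
    obtain ⟨l', hl', r', hr', h | h⟩ := mem_flips_node.1 hs <;> subst h <;>
      obtain ⟨a, ha, b, hb, h | h⟩ := mem_flips_node.1 hu <;> subst h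
    · exact mem_flips_node.2 ⟨a, ihl hl' ha, b, ihr hr' hb, Or.inl rfl⟩
    · exact mem_flips_node.2 ⟨a, ihl hl' ha, b, ihr hr' hb, Or.inr rfl⟩
    · exact mem_flips_node.2 ⟨b, ihl hl' hb, a, ihr hr' ha, Or.inr rfl⟩
    · exact mem_flips_node.2 ⟨b, ihl hl' hb, a, ihr hr' ha, Or.inl rfl⟩

lemma rel_flips {t s : BTree ℕ} (h : BTree.Rel t s) : s ∈ flips t := by
  induction h with
  | swap l r => exact mem_flips_node.2 ⟨l, flips_self l, r, flips_self r, Or.inr rfl⟩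
  | congrL r _ ih => exact mem_flips_node.2 ⟨_, ih, r, flips_self r, Or.inl rfl⟩
  | congrR l _ ih => exact mem_flips_node.2 ⟨l, flips_self l, _, ih, Or.inl rfl⟩

lemma eqvGen_congrL {l l' : BTree ℕ} (r : BTree ℕ)
    (h : Relation.EqvGen BTree.Rel l l') :
    Relation.EqvGen BTree.Rel (BTree.node l r) (BTree.node l' r) := by
  induction h with
  | rel _ _ h => exact Relation.EqvGen.rel _ _ (BTree.Rel.congrL r h)
  | refl _ => exact Relation.EqvGen.refl _
  | symm _ _ _ ih => exact ih.symm _ _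
  | trans _ _ _ _ _ ih1 ih2 => exact ih1.trans _ _ _ ih2

lemma eqvGen_congrR (l : BTree ℕ) {r r' : BTree ℕ}
    (h : Relation.EqvGen BTree.Rel r r') :
    Relation.EqvGen BTree.Rel (BTree.node l r) (BTree.node l r') := by
  induction h with
  | rel _ _ h => exact Relation.EqvGen.rel _ _ (BTree.Rel.congrR l h)
  | refl _ => exact Relation.EqvGen.refl _
  | symm _ _ _ ih => exact ih.symm _ _
  | trans _ _ _ _ _ ih1 ih2 => exact ih1.trans _ _ _ ih2

lemma eqvGen_iff_flips {t s : BTree ℕ} :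
    Relation.EqvGen BTree.Rel t s ↔ s ∈ flips t := by
  constructor
  · intro h
    induction h with
    | rel _ _ h => exact rel_flips h
    | refl t => exact flips_self t
    | symm _ _ _ ih => exact flips_symm ih
    | trans _ _ _ _ _ ih1 ih2 => exact flips_trans ih1 ih2
  · intro h
    induction t generalizing s with
    | leaf a =>
      simp only [flips, List.mem_singleton] at h; subst h; exact Relation.EqvGen.refl _
    | node l r ihl ihr =>
      obtain ⟨l', hl', r', hr', h | h⟩ := mem_flips_node.1 h <;> subst h
      · exact ((eqvGen_congrL r (ihl hl')).trans _ _ _ (eqvGen_congrR l' (ihr hr')))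
      · refine ((eqvGen_congrL r (ihl hl')).trans _ _ _
          ((eqvGen_congrR l' (ihr hr')).trans _ _ _ ?_))
        exact Relation.EqvGen.rel _ _ (BTree.Rel.swap l' r')

lemma quot_mk_eq_iff {t s : BTree ℕ} :
    Quot.mk BTree.Rel t = Quot.mk BTree.Rel s ↔ s ∈ flips t := by
  rw [Quot.eq]
  exact eqvGen_iff_flips

lemma length_flips : ∀ t : BTree ℕ, (flips t).length = 2 ^ t.internals := by
  intro t
  induction t with
  | leaf a => simp [flips, BTree.internals]
  | node l r ihl ihr =>
    simp only [flips, List.length_flatMap, BTree.internals]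
    rw [sum_map_of_const _ _ (2 * (flips r).length)
      (fun s _ => by
        rw [sum_map_of_const (flips r) (fun r' => [s.node r', r'.node s].length) 2
            (fun u _ => rfl)]
        ring)]
    rw [ihl, ihr, pow_add, pow_add]
    ring

lemma leafList_ne_nil (t : BTree ℕ) : t.leafList ≠ [] := by
  intro h
  have h1 := length_leafList t
  rw [h] at h1
  have h2 := leaves_pos t
  simp at h1
  omega

lemma flips_ne {l r a b : BTree ℕ} (ha : a ∈ flips l) (hb : b ∈ flips r)
    (hd : l.leafList.Disjoint r.leafList) : a ≠ b := by
  rintro rfl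
  obtain ⟨c, hc⟩ := List.exists_mem_of_ne_nil _ (leafList_ne_nil l)
  exact hd hc ((leafList_flips hb).subset ((leafList_flips ha).symm.subset hc))

lemma nodup_flips : ∀ t : BTree ℕ, t.leafList.Nodup → (flips t).Nodup := by
  intro t
  induction t with
  | leaf a => intro _; simp [flips]
  | node l r ihl ihr =>
    intro hnd
    simp only [BTree.leafList] at hnd
    have hdisj := List.disjoint_of_nodup_append hnd
    have hndl := hnd.of_append_left
    have hndr := hnd.of_append_right
    simp only [flips]
    rw [List.nodup_flatMap]
    constructor
    · intro l' hl'
      rw [List.nodup_flatMap]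
      constructor
      · intro r' hr'
        have : BTree.node l' r' ≠ BTree.node r' l' := by
          intro h
          injection h with h1 h2
          exact flips_ne hl' hr' hdisj h1
        simp [this]
      · refine (ihr hndr).imp_of_mem ?_
        intro r' r'' hr' hr'' hne
        intro s hs hs'
        simp only [List.mem_cons, List.not_mem_nil, or_false] at hs hs'
        rcases hs with rfl | rfl
        · rcases hs' with h | h
          · injection h with h1 h2; exact hne h2
          · injection h with h1 h2; exact flips_ne hl' hr'' hdisj h1
        · rcases hs' with h | h
          · injection h with h1 h2; exact flips_ne hl' hr' hdisj h1.symm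
          · injection h with h1 h2; exact hne h1
    · refine (ihl hndl).imp_of_mem ?_
      intro l' l'' hl' hl'' hne
      intro s hs hs'
      simp only [List.mem_flatMap, List.mem_cons, List.not_mem_nil, or_false] at hs hs'
      obtain ⟨r', hr', hs⟩ := hs
      obtain ⟨r'', hr'', hs'⟩ := hs'
      rcases hs with rfl | rfl
      · rcases hs' with h | h
        · injection h with h1 h2; exact hne h1
        · injection h with h1 h2; exact flips_ne hl' hr'' hdisj h1
      · rcases hs' with h | h
        · injection h with h1 h2; exact flips_ne hl'' hr' hdisj h1.symm
        · injection h with h1 h2; exact hne h2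



lemma isPhylo_flips {n : ℕ} {t s : BTree ℕ} (h : s ∈ flips t) :
    t.isPhylo n ↔ s.isPhylo n := by
  unfold BTree.isPhylo
  exact ⟨fun hp => (leafList_flips h).trans hp, fun hp => ((leafList_flips h).symm).trans hp⟩

noncomputable def Fn (n : ℕ) : Finset (BTree ℕ) := (allP n).toFinset

noncomputable def Qn (n : ℕ) : Finset PTree := (Fn n).image (Quot.mk BTree.Rel)

lemma mem_Fn {n : ℕ} {t : BTree ℕ} : t ∈ Fn n ↔ t.isPhylo n := by
  rw [Fn, List.mem_toFinset]
  exact ⟨mem_allP_isPhylo n t, isPhylo_mem_allP n t⟩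

lemma phyloSet_eq_Qn (n : ℕ) : PhyloSet n = ↑(Qn n) := by
  ext q
  simp only [PhyloSet, Set.mem_setOf_eq, Qn, Finset.coe_image, Set.mem_image,
    Finset.mem_coe]
  constructor
  · intro hq
    exact Finset.mem_image.2 ⟨q.out, mem_Fn.2 hq, q.out_eq⟩
  · intro hq
    obtain ⟨t, ht, rfl⟩ := Finset.mem_image.1 hq
    have : (Quot.mk BTree.Rel t).out ∈ flips t := by
      rw [← quot_mk_eq_iff]
      exact (Quot.out_eq _).symm ▸ rfl
    exact (isPhylo_flips this).1 (mem_Fn.1 ht)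

lemma out_mem_flips_of_mk {t : BTree ℕ} {q : PTree} (h : Quot.mk BTree.Rel t = q) :
    q.out ∈ flips t := by
  rw [← quot_mk_eq_iff, h]
  exact (Quot.out_eq q).symm

lemma isPhylo_out_of_mem_Qn {n : ℕ} {q : PTree} (hq : q ∈ Qn n) : q.out.isPhylo n := by
  have : q ∈ PhyloSet n := by rw [phyloSet_eq_Qn]; exact_mod_cast hq
  exact this

lemma fiber_eq_flips {n : ℕ} {q : PTree} (hq : q ∈ Qn n) :
    (Fn n).filter (fun t => Quot.mk BTree.Rel t = q) = (flips q.out).toFinset := by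
  ext t
  simp only [Finset.mem_filter, List.mem_toFinset]
  constructor
  · rintro ⟨ht, rfl⟩
    exact flips_symm (out_mem_flips_of_mk rfl)
  · intro ht
    have h1 : q.out.isPhylo n := isPhylo_out_of_mem_Qn hq
    have h2 : t.isPhylo n := (isPhylo_flips ht).1 h1
    refine ⟨mem_Fn.2 h2, ?_⟩
    rw [quot_mk_eq_iff.2 (flips_symm ht)]
    exact Quot.out_eq q

lemma card_flips_out {n : ℕ} (hn : 1 ≤ n) {q : PTree} (hq : q ∈ Qn n) :
    (flips q.out).toFinset.card = 2 ^ (n - 1) := by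
  have h1 : q.out.isPhylo n := isPhylo_out_of_mem_Qn hq
  have hnd := isPhylo_nodup h1
  rw [List.card_toFinset, (nodup_flips _ hnd).dedup, length_flips]
  have h2 := internals_add_one q.out
  have h3 := leaves_of_isPhylo h1
  congr 1
  omega

lemma sum_fiber_const {n : ℕ} (hn : 1 ≤ n) {q : PTree} (hq : q ∈ Qn n)
    (f : BTree ℕ → ℕ) (c : ℕ) (hf : ∀ s ∈ flips q.out, f s = c) :
    ∑ t ∈ (Fn n).filter (fun t => Quot.mk BTree.Rel t = q), f t = 2 ^ (n - 1) * c := by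
  rw [fiber_eq_flips hq]
  rw [Finset.sum_congr rfl (fun s hs => hf s (List.mem_toFinset.1 hs))]
  rw [Finset.sum_const, card_flips_out hn hq, smul_eq_mul]

lemma sum_Fn_eq (n : ℕ) (f : BTree ℕ → ℕ) :
    ∑ t ∈ Fn n, f t = ∑ q ∈ Qn n, ∑ t ∈ (Fn n).filter (fun t => Quot.mk BTree.Rel t = q), f t :=
  (Finset.sum_fiberwise_of_maps_to (fun t ht => Finset.mem_image_of_mem _ ht) f).symm

lemma length_allP_eq {n : ℕ} (hn : 1 ≤ n) : (allP n).length = 2 ^ (n - 1) * aP n := by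
  have h1 : (allP n).length = ∑ t ∈ Fn n, (fun _ => 1) t := by
    rw [Finset.sum_const, smul_eq_mul, mul_one, Fn, List.card_toFinset, (nodup_allP n).dedup]
  rw [h1, sum_Fn_eq]
  rw [Finset.sum_congr rfl (fun q hq => sum_fiber_const hn hq _ 1 (fun _ _ => rfl))]
  rw [Finset.sum_const, smul_eq_mul, aP, phyloSet_eq_Qn, Set.ncard_coe_finset]
  ring

lemma sum_sackin_allP_eq {n : ℕ} (hn : 1 ≤ n) :
    ((allP n).map BTree.sackin).sum = 2 ^ (n - 1) * SpTotal n := by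
  have h1 : ((allP n).map BTree.sackin).sum = ∑ t ∈ Fn n, BTree.sackin t := by
    rw [Fn, List.sum_toFinset _ (nodup_allP n)]
  rw [h1, sum_Fn_eq]
  rw [Finset.sum_congr rfl (fun q hq =>
    sum_fiber_const hn hq _ (BTree.sackin q.out) (fun s hs => sackin_flips hs))]
  rw [← Finset.mul_sum, SpTotal, phyloSet_eq_Qn, finsum_mem_coe_finset]



noncomputable def Fq (n : ℕ) : ℚ :=
  (4 : ℚ) ^ (n - 1) * (Nat.factorial n : ℚ) * (Nat.factorial (n - 1) : ℚ) /
    (Nat.factorial (2 * n - 2) : ℚ) - (n : ℚ)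

lemma sum_map_affine (l : List (BTree ℕ)) (f : BTree ℕ → ℕ) (a c : ℕ) :
    (l.map (fun t => a * f t + c)).sum = a * (l.map f).sum + l.length * c := by
  induction l with
  | nil => simp
  | cons x t ih =>
    simp only [List.map_cons, List.sum_cons, List.length_cons]
    rw [ih, Nat.succ_mul]
    ring

lemma length_allP_succ {n : ℕ} (hn : 1 ≤ n) :
    (allP (n + 1)).length = (4 * n - 2) * (allP n).length := by
  obtain ⟨m, rfl⟩ := Nat.exists_eq_add_of_le hn
  rw [Nat.add_comm 1 m]
  show ((allP (m+1)).flatMap (attach2 (m+2))).length = _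
  rw [List.length_flatMap]
  rw [sum_map_of_const (allP (m+1)) _ (4 * (m+1) - 2) (fun t ht => by
    have h1 := length_attach2 (m+2) t
    have h2 := leaves_of_isPhylo (mem_allP_isPhylo _ t ht)
    omega)]
  ring

lemma sackin_allP_succ {n : ℕ} (hn : 1 ≤ n) :
    ((allP (n + 1)).map BTree.sackin).sum
      = (4 * n + 4) * ((allP n).map BTree.sackin).sum + (2 * n + 2) * (allP n).length := by
  obtain ⟨m, rfl⟩ := Nat.exists_eq_add_of_le hn
  rw [Nat.add_comm 1 m]
  show (((allP (m+1)).flatMap (attach2 (m+2))).map BTree.sackin).sum = _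
  rw [List.map_flatMap]
  rw [List.flatMap_def, List.sum_flatten, List.map_map]
  have hcongr : ((allP (m+1)).map (List.sum ∘ fun a => (attach2 (m+2) a).map BTree.sackin))
      = (allP (m+1)).map (fun t => (4 * (m+1) + 4) * BTree.sackin t + (2 * (m+1) + 2)) := by
    refine List.map_congr_left (fun t ht => ?_)
    simp only [Function.comp_apply]
    rw [sackin_sum_attach2, leaves_of_isPhylo (mem_allP_isPhylo _ t ht)]
    ring
  rw [hcongr, sum_map_affine]
  ring

lemma length_allP_pos : ∀ n, 1 ≤ n → 0 < (allP n).length := by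
  intro n
  induction n with
  | zero => omega
  | succ m ih =>
    intro _
    rcases Nat.eq_zero_or_pos m with rfl | hm
    · simp [allP]
    · rw [length_allP_succ hm]
      have h1 := ih hm
      have h2 : 0 < 4 * m - 2 := by omega
      exact Nat.mul_pos h2 h1

lemma factorial_cast_ne (k : ℕ) : ((Nat.factorial k : ℚ)) ≠ 0 := by
  exact_mod_cast Nat.factorial_ne_zero k

lemma Fq_rec (n : ℕ) (hn : 1 ≤ n) :
    ((4 * n - 2 : ℕ) : ℚ) * Fq (n + 1) = (4 * n + 4) * Fq n + (2 * n + 2) := by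
  obtain ⟨m, rfl⟩ := Nat.exists_eq_add_of_le hn
  rw [Nat.add_comm 1 m]
  have e1 : (4 * (m + 1) - 2 : ℕ) = 4 * m + 2 := by omega
  have e2 : (m + 1 + 1) - 1 = m + 1 := rfl
  have e3 : 2 * (m + 1 + 1) - 2 = 2 * m + 2 := by omega
  have e4 : (m + 1) - 1 = m := rfl
  have e5 : 2 * (m + 1) - 2 = 2 * m := by omega
  rw [e1]
  unfold Fq
  rw [e2, e3, e4, e5]
  have f1 : (Nat.factorial (2 * m + 2) : ℚ) = (2 * m + 2) * (2 * m + 1) * Nat.factorial (2 * m) := by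
    have : 2 * m + 2 = (2 * m + 1) + 1 := rfl
    rw [this, Nat.factorial_succ, Nat.factorial_succ]
    push_cast
    ring
  have f2 : (Nat.factorial (m + 1 + 1) : ℚ) = (m + 2) * Nat.factorial (m + 1) := by
    rw [Nat.factorial_succ]; push_cast; ring
  have f3 : (Nat.factorial (m + 1) : ℚ) = (m + 1) * Nat.factorial m := by
    rw [Nat.factorial_succ]; push_cast; ring
  rw [f1, f2, f3]
  have h2m : ((Nat.factorial (2 * m) : ℚ)) ≠ 0 := factorial_cast_ne _
  have hm1 : ((2 : ℚ) * m + 2) * (2 * m + 1) ≠ 0 := by positivity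
  field_simp
  push_cast
  ring

lemma key_ratio : ∀ n, 1 ≤ n →
    (((allP n).map BTree.sackin).sum : ℚ) = ((allP n).length : ℚ) * Fq n := by
  intro n
  induction n with
  | zero => omega
  | succ m ih =>
    intro _
    rcases Nat.eq_zero_or_pos m with rfl | hm
    · show ((([BTree.leaf 1] : List (BTree ℕ)).map BTree.sackin).sum : ℚ) = _
      show _ = ((([BTree.leaf 1] : List (BTree ℕ))).length : ℚ) * Fq 1
      simp [BTree.sackin, Fq, Nat.factorial]
    · have hrecT := sackin_allP_succ hm
      have hrecN := length_allP_succ hm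
      have hF := Fq_rec m hm
      have hcast : ((4 * m - 2 : ℕ) : ℚ) = 4 * (m : ℚ) - 2 := by
        have h2 : 2 ≤ 4 * m := by omega
        push_cast [Nat.cast_sub h2]
        ring
      rw [hcast] at hF
      generalize hc : ((allP m).map BTree.sackin).sum = c at hrecT ih
      generalize hd : (allP m).length = d at hrecT hrecN ih
      rw [hrecT, hrecN]
      push_cast [Nat.cast_sub (show 2 ≤ 4 * m from by omega)]
      rw [ih hm]
      linear_combination (-(d : ℚ)) * hF

end MyAux

theorem stmt_16 : ∀ n : ℕ, 2 ≤ n →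
    (SpTotal n : ℚ) / (aP n : ℚ) =
      (4 : ℚ) ^ (n - 1) * (Nat.factorial n : ℚ) * (Nat.factorial (n - 1) : ℚ) /
        (Nat.factorial (2 * n - 2) : ℚ) - (n : ℚ) := by
  intro n hn
  have hn1 : 1 ≤ n := by omega
  have hT := MyAux.sum_sackin_allP_eq hn1
  have hN := MyAux.length_allP_eq hn1
  have hk := MyAux.key_ratio n hn1
  have hNpos := MyAux.length_allP_pos n hn1
  generalize hc : ((MyAux.allP n).map BTree.sackin).sum = c at hT hk
  generalize hd : (MyAux.allP n).length = d at hN hk hNpos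
  have haP : 0 < aP n := by
    rcases Nat.eq_zero_or_pos (aP n) with h0 | h
    · rw [h0, Nat.mul_zero] at hN; omega
    · exact h
  have haPq : ((aP n : ℚ)) ≠ 0 := by exact_mod_cast haP.ne'
  have hcq : (c : ℚ) = 2 ^ (n - 1) * (SpTotal n : ℚ) := by rw [hT]; push_cast; ring
  have hdq : (d : ℚ) = 2 ^ (n - 1) * (aP n : ℚ) := by rw [hN]; push_cast; ring
  rw [hcq, hdq] at hk
  have h2 : ((2 : ℚ) ^ (n - 1)) ≠ 0 := pow_ne_zero _ two_ne_zero
  have hmain : (SpTotal n : ℚ) = (aP n : ℚ) * MyAux.Fq n :=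
    mul_left_cancel₀ h2 (hk.trans (mul_assoc _ _ _))
  rw [div_eq_iff haPq]
  show _ = MyAux.Fq n * (aP n : ℚ)
  rw [hmain]
  ring
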